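/- If B is a boundary for X, then a bounded sequence (x_n) in X converges weakly to x ∈ X if and only if b(x_n) → b(x) for every b ∈ B. -/

import Mathlib

noncomputable section
open Filter Topology Set NormedSpace Pointwise

variable {X : Type*} [NormedAddCommGroup X] [NormedSpace ℝ X] [CompleteSpace X]

/-- `B` is a boundary for `X`: a subset of the dual unit sphere on which every
element of `X` attains its norm. -/
def IsBoundary (B : Set (StrongDual ℝ X)) : Prop :=
  (∀ f ∈ B, ‖f‖ = 1) ∧ ∀ x : X, ∃ f ∈ B, f x = ‖x‖

/-- The closure of `S` in the topology `σ_B` of pointwise convergence on `B`. -/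
def sigmaClosure (B : Set (StrongDual ℝ X)) (S : Set X) : Set X :=
  {x | ∀ ε > (0 : ℝ), ∀ F : Finset (StrongDual ℝ X), (F : Set (StrongDual ℝ X)) ⊆ B →
    ∃ y ∈ S, ∀ f ∈ F, |f x - f y| < ε}

namespace RSAux

/-- countable convex combinations of `y k`, `k ≥ n`. -/
def CSet (y : ℕ → X) (n : ℕ) : Set X :=
  {z | ∃ lam : ℕ → ℝ, (∀ k, 0 ≤ lam k) ∧ (∀ k, k < n → lam k = 0) ∧ HasSum lam 1 ∧
    HasSum (fun k => lam k • y k) z}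

lemma self_mem_CSet (y : ℕ → X) (n : ℕ) : y n ∈ CSet y n := by
  refine ⟨fun k => if k = n then 1 else 0, ?_, ?_, ?_, ?_⟩
  · intro k; dsimp only; split <;> norm_num
  · intro k hk; dsimp only; rw [if_neg hk.ne]
  · exact hasSum_ite_eq n 1
  · convert hasSum_ite_eq n (y n) using 1
    funext k; split <;> simp_all

lemma CSet.norm_le {y : ℕ → X} {M : ℝ} (hM : ∀ k, ‖y k‖ ≤ M) {n : ℕ} {z : X}
    (hz : z ∈ CSet y n) : ‖z‖ ≤ M := by
  obtain ⟨lam, h0, -, h1, hz⟩ := hz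
  have hsum : Summable fun k => lam k * M := h1.summable.mul_right M
  have hle : ∀ k, ‖lam k • y k‖ ≤ lam k * M := fun k => by
    rw [norm_smul, Real.norm_of_nonneg (h0 k)]
    exact mul_le_mul_of_nonneg_left (hM k) (h0 k)
  have hnorm : Summable fun k => ‖lam k • y k‖ :=
    Summable.of_nonneg_of_le (fun k => norm_nonneg _) hle hsum
  calc ‖z‖ = ‖∑' k, lam k • y k‖ := by rw [hz.tsum_eq]
    _ ≤ ∑' k, ‖lam k • y k‖ := norm_tsum_le_tsum_norm hnorm
    _ ≤ ∑' k, lam k * M := Summable.tsum_le_tsum hle hnorm hsum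
    _ = (∑' k, lam k) * M := tsum_mul_right
    _ = M := by rw [h1.tsum_eq, one_mul]

lemma CSet.apply_le {y : ℕ → X} {n : ℕ} {z : X} (hz : z ∈ CSet y n)
    (f : StrongDual ℝ X) (c : ℝ) (hc : ∀ k, n ≤ k → f (y k) ≤ c) : f z ≤ c := by
  obtain ⟨lam, h0, hn, h1, hz⟩ := hz
  have hfz : HasSum (fun k => lam k * f (y k)) (f z) := by
    have := f.hasSum hz
    simpa [smul_eq_mul] using this
  have hc' : HasSum (fun k => lam k * c) c := by simpa using h1.mul_right c
  refine hasSum_le (fun k => ?_) hfz hc'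
  rcases lt_or_ge k n with h | h
  · simp [hn k h]
  · exact mul_le_mul_of_nonneg_left (hc k h) (h0 k)


lemma flatten {y : ℕ → X} {M : ℝ} (hM : ∀ k, ‖y k‖ ≤ M) (n : ℕ) {c : ℕ → ℝ}
    (hc0 : ∀ j, 0 ≤ c j) (hcn : ∀ j, j < n → c j = 0) (hc1 : HasSum c 1)
    {g : ℕ → X} (hg : ∀ j, g j ∈ CSet y j) {z : X}
    (hz : HasSum (fun j => c j • g j) z) : z ∈ CSet y n := by
  choose lam h0 hsupp h1 hsum using hg
  set F : ℕ × ℕ → ℝ := fun p => c p.1 * lam p.1 p.2 with hFdef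
  have hF0 : ∀ p, 0 ≤ F p := fun p => mul_nonneg (hc0 _) (h0 _ _)
  have hrow : ∀ j, Summable fun k => F (j, k) := fun j => (h1 j).summable.mul_left (c j)
  have hrowsum : ∀ j, (∑' k, F (j, k)) = c j := fun j => by
    simp only [hFdef]
    rw [tsum_mul_left, (h1 j).tsum_eq, mul_one]
  have hFsum : Summable F := by
    rw [summable_prod_of_nonneg hF0]
    refine ⟨hrow, ?_⟩
    simp only [hrowsum]
    exact hc1.summable
  have hFswap : Summable fun p : ℕ × ℕ => F (p.2, p.1) := by
    have := hFsum.prod_symm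
    simpa [Prod.swap] using this
  have hcol : ∀ k, Summable fun j => F (j, k) :=
    fun k => ((summable_prod_of_nonneg (fun p => hF0 _)).mp hFswap).1 k
  set mu : ℕ → ℝ := fun k => ∑' j, F (j, k) with hmudef
  have hmu_summable : Summable mu :=
    ((summable_prod_of_nonneg (fun p => hF0 _)).mp hFswap).2
  have hmu0 : ∀ k, 0 ≤ mu k := fun k => tsum_nonneg fun j => hF0 _
  have hmu_supp : ∀ k, k < n → mu k = 0 := by
    intro k hk
    have : ∀ j, F (j, k) = 0 := by
      intro j
      rcases lt_or_ge j n with hj | hj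
      · simp [hFdef, hcn j hj]
      · simp [hFdef, hsupp j k (lt_of_lt_of_le hk hj)]
    simp [hmudef, this]
  have hmu_tsum : (∑' k, mu k) = 1 := by
    have := Summable.tsum_comm' (f := fun j k => F (j, k)) hFsum hrow hcol
    calc (∑' k, mu k) = ∑' k, ∑' j, F (j, k) := rfl
      _ = ∑' j, ∑' k, F (j, k) := this
      _ = ∑' j, c j := by simp only [hrowsum]
      _ = 1 := hc1.tsum_eq
  -- vector part
  set G : ℕ × ℕ → X := fun p => F p • y p.2 with hGdef
  have hGsum : Summable G := by
    refine Summable.of_norm_bounded (hFsum.mul_right M) (fun p => ?_)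
    rw [hGdef, norm_smul, Real.norm_of_nonneg (hF0 p)]
    exact mul_le_mul_of_nonneg_left (hM p.2) (hF0 p)
  have hGrow : ∀ j, Summable fun k => G (j, k) := by
    intro j
    refine Summable.of_norm_bounded ((hrow j).mul_right M) (fun k => ?_)
    rw [hGdef, norm_smul, Real.norm_of_nonneg (hF0 (j, k))]
    exact mul_le_mul_of_nonneg_left (hM k) (hF0 (j, k))
  have hGcol : ∀ k, Summable fun j => G (j, k) := by
    intro k
    refine Summable.of_norm_bounded ((hcol k).mul_right M) (fun j => ?_)
    rw [hGdef, norm_smul, Real.norm_of_nonneg (hF0 (j, k))]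
    exact mul_le_mul_of_nonneg_left (hM k) (hF0 (j, k))
  have hz1 : z = ∑' j, c j • g j := hz.tsum_eq.symm
  have hz2 : (∑' j, c j • g j) = ∑' j, ∑' k, G (j, k) := by
    refine tsum_congr fun j => ?_
    have : c j • g j = c j • ∑' k, lam j k • y k := by rw [(hsum j).tsum_eq]
    rw [this, ← Summable.tsum_const_smul (c j) (hsum j).summable]
    refine tsum_congr fun k => ?_
    rw [hGdef, smul_smul]
  have hz3 : (∑' j, ∑' k, G (j, k)) = ∑' k, ∑' j, G (j, k) :=
    (Summable.tsum_comm' (f := fun j k => G (j, k)) hGsum hGrow hGcol).symm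
  have hz4 : (∑' k, ∑' j, G (j, k)) = ∑' k, mu k • y k := by
    refine tsum_congr fun k => ?_
    rw [hmudef]
    exact Summable.tsum_smul_const (hcol k) (y k)
  have hmuy_summable : Summable fun k => mu k • y k := by
    refine Summable.of_norm_bounded (hmu_summable.mul_right M) (fun k => ?_)
    rw [norm_smul, Real.norm_of_nonneg (hmu0 k)]
    exact mul_le_mul_of_nonneg_left (hM k) (hmu0 k)
  refine ⟨mu, hmu0, hmu_supp, hmu_summable.hasSum_iff.mpr hmu_tsum,
    hmuy_summable.hasSum_iff.mpr ?_⟩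
  rw [← hz4, ← hz3, ← hz2, ← hz1]


lemma exists_pick (y : ℕ → X) (n : ℕ) (h : X) (w ε' : ℝ) (hε : 0 < ε') :
    ∃ z ∈ CSet y n, ∀ z' ∈ CSet y n, ‖h + w • z‖ ≤ ‖h + w • z'‖ + ε' := by
  set T : Set ℝ := (fun z => ‖h + w • z‖) '' CSet y n with hT
  have hne : T.Nonempty := ⟨_, ⟨y n, self_mem_CSet y n, rfl⟩⟩
  obtain ⟨a, ha, halt⟩ := Real.lt_sInf_add_pos hne hε
  obtain ⟨z, hz, rfl⟩ := ha
  refine ⟨z, hz, fun z' hz' => ?_⟩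
  have hbdd : BddBelow T := ⟨0, fun r hr => by
    obtain ⟨u, -, rfl⟩ := hr; exact norm_nonneg _⟩
  have h2 : sInf T ≤ ‖h + w • z'‖ := csInf_le hbdd ⟨z', hz', rfl⟩
  linarith

variable (y : ℕ → X) (ε : ℝ)

/-- a near-minimizer of `z ↦ ‖h + 2⁻ⁿ⁻¹ z‖` over `CSet y n`, tolerance `ε/4ⁿ⁺¹`. -/
def pickEl (n : ℕ) (h : X) : X :=
  if hε : 0 < ε * (1/4 : ℝ) ^ (n+1) then
    (exists_pick y n h ((1/2 : ℝ) ^ (n+1)) _ hε).choose else 0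

lemma pickEl_spec {ε : ℝ} (hε : 0 < ε) (n : ℕ) (h : X) :
    pickEl y ε n h ∈ CSet y n ∧ ∀ z' ∈ CSet y n,
      ‖h + (1/2 : ℝ) ^ (n+1) • pickEl y ε n h‖ ≤
        ‖h + (1/2 : ℝ) ^ (n+1) • z'‖ + ε * (1/4 : ℝ) ^ (n+1) := by
  have hε' : 0 < ε * (1/4 : ℝ) ^ (n+1) := by positivity
  rw [pickEl, dif_pos hε']
  obtain ⟨hmem, hmin⟩ := (exists_pick y n h ((1/2 : ℝ) ^ (n+1)) _ hε').choose_spec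
  exact ⟨hmem, hmin⟩

/-- the partial sums `h_n` of Simons' construction. -/
def HH : ℕ → X
  | 0 => 0
  | n + 1 => HH n + ((1 : ℝ)/2) ^ (n+1) • pickEl y ε n (HH n)

/-- the chosen elements `g_n` of Simons' construction. -/
def GG (n : ℕ) : X := pickEl y ε n (HH y ε n)

lemma HH_succ (n : ℕ) : HH y ε (n+1) = HH y ε n + ((1:ℝ)/2) ^ (n+1) • GG y ε n := rfl

lemma GG_mem {ε : ℝ} (hε : 0 < ε) (n : ℕ) : GG y ε n ∈ CSet y n :=
  (pickEl_spec y hε n (HH y ε n)).1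

lemma GG_min {ε : ℝ} (hε : 0 < ε) (n : ℕ) : ∀ z' ∈ CSet y n,
    ‖HH y ε (n+1)‖ ≤ ‖HH y ε n + (1/2 : ℝ) ^ (n+1) • z'‖ + ε * (1/4 : ℝ) ^ (n+1) := by
  intro z' hz'
  rw [HH_succ]
  exact (pickEl_spec y hε n (HH y ε n)).2 z' hz'

lemma HH_eq_sum (n : ℕ) :
    HH y ε n = ∑ k ∈ Finset.range n, ((1:ℝ)/2) ^ (k+1) • GG y ε k := by
  induction n with
  | zero => simp [HH]
  | succ n ih => rw [HH_succ, ih, Finset.sum_range_succ]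

lemma w_hasSum : HasSum (fun k => ((1:ℝ)/2) ^ (k+1)) 1 := by
  have := hasSum_geometric_two' 1
  convert this using 2 with k
  rw [pow_succ]
  field_simp
  rw [← mul_pow]; norm_num


/-- the full sum `g` of Simons' construction. -/
def Ginf : X := ∑' k, ((1:ℝ)/2) ^ (k+1) • GG y ε k

variable {M : ℝ}

lemma GG_summable (hM : ∀ k, ‖y k‖ ≤ M) (hε : 0 < ε) :
    Summable (fun k => ((1:ℝ)/2) ^ (k+1) • GG y ε k) := by
  refine Summable.of_norm_bounded
    ((w_hasSum).summable.mul_right M) (fun k => ?_)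
  rw [norm_smul, Real.norm_of_nonneg (by positivity)]
  exact mul_le_mul_of_nonneg_left (CSet.norm_le hM (GG_mem y hε k)) (by positivity)

lemma Ginf_hasSum (hM : ∀ k, ‖y k‖ ≤ M) (hε : 0 < ε) :
    HasSum (fun k => ((1:ℝ)/2) ^ (k+1) • GG y ε k) (Ginf y ε) :=
  (GG_summable y ε hM hε).hasSum

lemma geom_partial (n : ℕ) :
    ∑ j ∈ Finset.range n, ((1:ℝ)/2) ^ (j+1) = 1 - ((1:ℝ)/2) ^ n := by
  induction n with
  | zero => simp
  | succ n ih => rw [Finset.sum_range_succ, ih, pow_succ]; ring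

lemma two_halves (n : ℕ) : (2:ℝ) ^ n * ((1:ℝ)/2) ^ n = 1 := by
  rw [one_div, inv_pow, mul_inv_cancel₀ (pow_ne_zero n two_ne_zero)]

/-- coefficients of the tail element `u_n`. -/
def cn (n : ℕ) : ℕ → ℝ := fun j => if j < n then 0 else (2:ℝ) ^ n * ((1:ℝ)/2) ^ (j+1)

lemma cn_hasSum (n : ℕ) : HasSum (cn n) 1 := by
  have hqc : HasSum (fun j => (2:ℝ) ^ n * ((1:ℝ)/2) ^ (j+1)) ((2:ℝ) ^ n) := by
    simpa using (w_hasSum).mul_left ((2:ℝ) ^ n)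
  have hdc : HasSum (fun j => if j < n then (2:ℝ) ^ n * ((1:ℝ)/2) ^ (j+1) else 0)
      (∑ j ∈ Finset.range n, if j < n then (2:ℝ) ^ n * ((1:ℝ)/2) ^ (j+1) else 0) := by
    refine hasSum_sum_of_ne_finset_zero fun j hj => ?_
    rw [if_neg (by simpa using hj)]
  have hsum_eq : (∑ j ∈ Finset.range n, if j < n then (2:ℝ) ^ n * ((1:ℝ)/2) ^ (j+1) else 0)
      = (2:ℝ) ^ n * (1 - ((1:ℝ)/2) ^ n) := by
    rw [Finset.sum_congr rfl (fun j hj => if_pos (Finset.mem_range.mp hj)),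
      ← Finset.mul_sum, geom_partial]
  rw [hsum_eq] at hdc
  have := hqc.sub hdc
  have heq : (fun j => ((2:ℝ) ^ n * ((1:ℝ)/2) ^ (j+1)) -
      (if j < n then (2:ℝ) ^ n * ((1:ℝ)/2) ^ (j+1) else 0)) = cn n := by
    funext j
    by_cases hj : j < n <;> simp [cn, hj]
  rw [heq] at this
  have hval : (2:ℝ) ^ n - (2:ℝ) ^ n * (1 - ((1:ℝ)/2) ^ n) = 1 := by
    have := two_halves n; nlinarith [two_halves n]
  rwa [hval] at this

lemma un_hasSum (hM : ∀ k, ‖y k‖ ≤ M) (hε : 0 < ε) (n : ℕ) :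
    HasSum (fun j => cn n j • GG y ε j) ((2:ℝ) ^ n • (Ginf y ε - HH y ε n)) := by
  have hq : HasSum (fun j => (2:ℝ) ^ n • (((1:ℝ)/2) ^ (j+1) • GG y ε j))
      ((2:ℝ) ^ n • Ginf y ε) := (Ginf_hasSum y ε hM hε).const_smul _
  have hd : HasSum (fun j => if j < n then (2:ℝ) ^ n • (((1:ℝ)/2) ^ (j+1) • GG y ε j) else 0)
      (∑ j ∈ Finset.range n, if j < n then (2:ℝ) ^ n • (((1:ℝ)/2) ^ (j+1) • GG y ε j) else 0) := by
    refine hasSum_sum_of_ne_finset_zero fun j hj => ?_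
    rw [if_neg (by simpa using hj)]
  have hsum_eq : (∑ j ∈ Finset.range n, if j < n then
        (2:ℝ) ^ n • (((1:ℝ)/2) ^ (j+1) • GG y ε j) else 0)
      = (2:ℝ) ^ n • HH y ε n := by
    rw [Finset.sum_congr rfl (fun j hj => if_pos (Finset.mem_range.mp hj)),
      ← Finset.smul_sum, ← HH_eq_sum]
  rw [hsum_eq] at hd
  have := hq.sub hd
  have heq : (fun j => ((2:ℝ) ^ n • (((1:ℝ)/2) ^ (j+1) • GG y ε j)) -
      (if j < n then (2:ℝ) ^ n • (((1:ℝ)/2) ^ (j+1) • GG y ε j) else 0))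
      = fun j => cn n j • GG y ε j := by
    funext j
    by_cases hj : j < n <;> simp [cn, hj, smul_smul]
  rw [heq] at this
  rwa [← smul_sub] at this

lemma un_mem (hM : ∀ k, ‖y k‖ ≤ M) (hε : 0 < ε) (n : ℕ) :
    (2:ℝ) ^ n • (Ginf y ε - HH y ε n) ∈ CSet y n := by
  refine flatten hM n (fun j => ?_) (fun j hj => if_pos hj) (cn_hasSum n)
    (fun j => GG_mem y hε j) (un_hasSum y ε hM hε n)
  show (0:ℝ) ≤ if j < n then 0 else (2:ℝ) ^ n * ((1:ℝ)/2) ^ (j+1)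
  split
  · exact le_refl 0
  · positivity

lemma norm_HH_le (hM : ∀ k, ‖y k‖ ≤ M) (hε : 0 < ε) (n : ℕ) :
    ‖HH y ε n‖ ≤ ‖Ginf y ε‖ - ((1:ℝ)/2) ^ n * ‖Ginf y ε‖
      + ((1:ℝ)/2) ^ n * (1 - ((1:ℝ)/2) ^ n) * ε := by
  set S := ‖Ginf y ε‖ with hS
  induction n with
  | zero => simp [HH]
  | succ n ih =>
    have hun := un_mem y ε hM hε n
    have h1 := GG_min y hε n _ hun
    have hsc : ((1:ℝ)/2) ^ (n+1) * (2:ℝ) ^ n = 1/2 := by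
      rw [pow_succ]
      nlinarith [two_halves n]
    have h2 : HH y ε n + ((1:ℝ)/2) ^ (n+1) • ((2:ℝ) ^ n • (Ginf y ε - HH y ε n))
        = (1/2 : ℝ) • (HH y ε n + Ginf y ε) := by
      rw [smul_smul, hsc]
      module
    rw [h2] at h1
    have h3 : ‖(1/2 : ℝ) • (HH y ε n + Ginf y ε)‖ ≤ (‖HH y ε n‖ + S) / 2 := by
      rw [norm_smul]
      have := norm_add_le (HH y ε n) (Ginf y ε)
      rw [Real.norm_of_nonneg (by norm_num : (0:ℝ) ≤ 1/2)]
      linarith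
    have ha1 : ((1:ℝ)/2) ^ (n+1) = ((1:ℝ)/2) ^ n / 2 := by rw [pow_succ]; ring
    have ha2 : ((1:ℝ)/4) ^ (n+1) = (((1:ℝ)/2) ^ n) ^ 2 / 4 := by
      have : ((1:ℝ)/4) = ((1:ℝ)/2) ^ 2 := by norm_num
      rw [this, ← pow_mul, ← pow_mul]
      ring_nf
    rw [ha2] at h1
    rw [ha1]
    linarith [ih, h1, h3]


omit [CompleteSpace X] in
lemma simons_key {y : ℕ → X} {M : ℝ} [CompleteSpace X] (hM : ∀ k, ‖y k‖ ≤ M)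
    (φ : StrongDual ℝ X) (hφ : ‖φ‖ ≤ 1) {ε₀ : ℝ} (hε₀ : 0 < ε₀) (hy : ∀ k, ε₀ ≤ φ (y k))
    (B : Set (StrongDual ℝ X)) (hB : IsBoundary B) :
    ∃ b ∈ B, ∀ N : ℕ, ∃ z ∈ CSet y N, ε₀ / 2 ≤ b z := by
  set ε := ε₀ / 2 with hεdef
  have hε : 0 < ε := by positivity
  have hG0 : Ginf y ε ∈ CSet y 0 :=
    flatten hM 0 (fun j => by positivity) (fun j hj => absurd hj (Nat.not_lt_zero j))
      w_hasSum (fun j => GG_mem y hε j) (Ginf_hasSum y ε hM hε)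
  have hφG : ε₀ ≤ φ (Ginf y ε) := by
    have := CSet.apply_le hG0 (-φ) (-ε₀) (fun k _ => by simpa using neg_le_neg (hy k))
    simpa using this
  set S := ‖Ginf y ε‖ with hS
  have hSge : ε₀ ≤ S := by
    have h1 : φ (Ginf y ε) ≤ ‖φ‖ * ‖Ginf y ε‖ :=
      le_trans (le_abs_self _) (φ.le_opNorm _)
    have h2 : ‖φ‖ * ‖Ginf y ε‖ ≤ 1 * ‖Ginf y ε‖ :=
      mul_le_mul_of_nonneg_right hφ (norm_nonneg _)
    rw [one_mul] at h2
    linarith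
  obtain ⟨b, hbB, hbG⟩ := hB.2 (Ginf y ε)
  refine ⟨b, hbB, fun N => ?_⟩
  refine ⟨(2:ℝ) ^ N • (Ginf y ε - HH y ε N), un_mem y ε hM hε N, ?_⟩
  have hb1 : ‖b‖ = 1 := hB.1 b hbB
  have hbH : b (HH y ε N) ≤ ‖HH y ε N‖ := by
    have h := b.le_opNorm (HH y ε N)
    rw [hb1, one_mul] at h
    calc b (HH y ε N) ≤ |b (HH y ε N)| := le_abs_self _
      _ = ‖b (HH y ε N)‖ := rfl
      _ ≤ ‖HH y ε N‖ := h
  have hHN := norm_HH_le y ε hM hε N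
  have hpowpos : (0:ℝ) < (2:ℝ) ^ N := by positivity
  have hp2 : (0:ℝ) ≤ ((1:ℝ)/2) ^ N := by positivity
  have h2N : (2:ℝ) ^ N * ((1:ℝ)/2) ^ N = 1 := two_halves N
  have h3 : ((1:ℝ)/2) ^ N * (S - ε) ≤ S - ‖HH y ε N‖ := by
    nlinarith [mul_nonneg (mul_nonneg hp2 hp2) hε.le]
  have hkey : S - ε ≤ (2:ℝ) ^ N * (S - ‖HH y ε N‖) := by
    have := mul_le_mul_of_nonneg_left h3 hpowpos.le
    calc S - ε = ((2:ℝ) ^ N * ((1:ℝ)/2) ^ N) * (S - ε) := by rw [h2N, one_mul]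
      _ = (2:ℝ) ^ N * (((1:ℝ)/2) ^ N * (S - ε)) := by ring
      _ ≤ (2:ℝ) ^ N * (S - ‖HH y ε N‖) := this
  have hmono : (2:ℝ) ^ N * (S - ‖HH y ε N‖) ≤ (2:ℝ) ^ N * (S - b (HH y ε N)) :=
    mul_le_mul_of_nonneg_left (by linarith) hpowpos.le
  have heval : b ((2:ℝ) ^ N • (Ginf y ε - HH y ε N))
      = (2:ℝ) ^ N * (S - b (HH y ε N)) := by
    rw [map_smul, map_sub, smul_eq_mul, hbG]
  rw [heval]
  have : ε₀ / 2 = S - ε - (S - ε₀) := by rw [hεdef]; ring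
  linarith

end RSAux

theorem rainwater_simons (B : Set (StrongDual ℝ X)) (hB : IsBoundary B)
    (x : ℕ → X) (C : ℝ) (hx : ∀ n, ‖x n‖ ≤ C) (x₀ : X) :
    (∀ f : StrongDual ℝ X, Tendsto (fun n => f (x n)) atTop (𝓝 (f x₀))) ↔
      (∀ b ∈ B, Tendsto (fun n => b (x n)) atTop (𝓝 (b x₀))) := by
  constructor
  · intro h b _
    exact h b
  · intro hBconv f
    by_contra hnot
    have hfne : f ≠ 0 := by
      rintro rfl
      exact hnot (by simpa using tendsto_const_nhds)
    have hfpos : (0:ℝ) < ‖f‖ := norm_pos_iff.mpr hfne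
    rw [Metric.tendsto_atTop] at hnot
    push_neg at hnot
    obtain ⟨δ, hδ, hfreqN⟩ := hnot
    have hfreq : ∃ᶠ n in atTop, δ ≤ f (x n) - f x₀ ∨ δ ≤ -(f (x n) - f x₀) := by
      rw [Filter.frequently_atTop]
      intro N
      obtain ⟨n, hn, hd⟩ := hfreqN N
      rw [Real.dist_eq] at hd
      exact ⟨n, hn, le_abs.mp hd⟩
    -- produce a norm-one functional ψ with frequently ε₀ ≤ ψ (x n - x₀)
    set ε₀ := δ / ‖f‖ with hε₀def
    have hε₀ : 0 < ε₀ := div_pos hδ hfpos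
    have hψ : ∃ ψ : StrongDual ℝ X, ‖ψ‖ ≤ 1 ∧ ∃ᶠ n in atTop, ε₀ ≤ ψ (x n - x₀) := by
      have hnorm : ‖(‖f‖⁻¹ • f : StrongDual ℝ X)‖ ≤ 1 := by
        rw [norm_smul, norm_inv, norm_norm, inv_mul_cancel₀ hfpos.ne']
      rcases Filter.frequently_or_distrib.mp hfreq with h | h
      · refine ⟨‖f‖⁻¹ • f, hnorm, h.mono fun n hn => ?_⟩
        have : ε₀ = ‖f‖⁻¹ * δ := by rw [hε₀def]; ring
        rw [this]
        simp only [ContinuousLinearMap.smul_apply, smul_eq_mul, map_sub]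
        linarith [mul_le_mul_of_nonneg_left hn (inv_nonneg.mpr hfpos.le)]
      · refine ⟨-(‖f‖⁻¹ • f), by simpa using hnorm, h.mono fun n hn => ?_⟩
        have : ε₀ = ‖f‖⁻¹ * δ := by rw [hε₀def]; ring
        rw [this]
        simp only [ContinuousLinearMap.neg_apply, ContinuousLinearMap.smul_apply,
          smul_eq_mul, map_sub]
        linarith [mul_le_mul_of_nonneg_left hn (inv_nonneg.mpr hfpos.le)]
    obtain ⟨ψ, hψ1, hψfreq⟩ := hψ
    obtain ⟨s, hs_mono, hsP⟩ := Filter.extraction_of_frequently_atTop hψfreq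
    set y : ℕ → X := fun k => x (s k) - x₀ with hydef
    have hM : ∀ k, ‖y k‖ ≤ C + ‖x₀‖ := fun k =>
      le_trans (norm_sub_le _ _) (add_le_add_left (hx (s k)) _)
    obtain ⟨b, hbB, hbprop⟩ := RSAux.simons_key hM ψ hψ1 hε₀ hsP B hB
    have hby : Tendsto (fun k => b (y k)) atTop (𝓝 0) := by
      have h1 : Tendsto (fun k => b (x (s k))) atTop (𝓝 (b x₀)) :=
        (hBconv b hbB).comp hs_mono.tendsto_atTop
      have h2 := h1.sub_const (b x₀)
      rw [sub_self] at h2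
      refine h2.congr fun k => ?_
      rw [hydef, map_sub]
    obtain ⟨N, hN⟩ := Metric.tendsto_atTop.mp hby (ε₀ / 4) (by positivity)
    have hNle : ∀ k, N ≤ k → b (y k) ≤ ε₀ / 4 := by
      intro k hk
      have := hN k hk
      rw [Real.dist_eq, sub_zero] at this
      exact le_of_lt (lt_of_le_of_lt (le_abs_self _) this)
    obtain ⟨z, hz, hbz⟩ := hbprop N
    have hle := RSAux.CSet.apply_le hz b (ε₀ / 4) hNle
    linarith
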